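/- Let θ_{t+1} = HT_s(z) where z = θ_t − γ g, and let θ̂ be s*-sparse with s* ≤ s. Let Ŝ_{t+1} be the union of the support of θ_{t+1} and the support of θ̂. Then ‖θ_{t+1} − θ̂‖ ≤ (1 + sqrt(s*/s)) · ‖[z]_{Ŝ_{t+1}} − θ̂‖, where [z]_S keeps the entries of z indexed by S and zeroes the rest. -/

import Mathlib

open Finset
open scoped RealInnerProductSpace

noncomputable def htSet {d : ℕ} (k : ℕ) (x : EuclideanSpace ℝ (Fin d)) : Finset (Fin d) :=
  (Finset.exists_max_image ((Finset.univ : Finset (Fin d)).powersetCard (min k d))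
    (fun S => ∑ i ∈ S, (x i) ^ 2)
    ((Finset.powersetCard_nonempty).2 (by simp))).choose

/-- Hard thresholding: keep the `k` entries of largest magnitude, zero the rest. -/
noncomputable def HT {d : ℕ} (k : ℕ) (x : EuclideanSpace ℝ (Fin d)) : EuclideanSpace ℝ (Fin d) :=
  WithLp.toLp 2 (fun i => if i ∈ htSet k x then x i else 0)

/-- Support of a vector. -/
noncomputable def supp {d : ℕ} (x : EuclideanSpace ℝ (Fin d)) : Finset (Fin d) :=
  Finset.univ.filter (fun i => x i ≠ 0)

/-- Restriction of a vector to an index set. -/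
noncomputable def restr {d : ℕ} (S : Finset (Fin d)) (x : EuclideanSpace ℝ (Fin d)) :
    EuclideanSpace ℝ (Fin d) :=
  WithLp.toLp 2 (fun i => if i ∈ S then x i else 0)

/-- ℓ1 norm. -/
noncomputable def l1norm {d : ℕ} (x : EuclideanSpace ℝ (Fin d)) : ℝ := ∑ i, |x i|

/-- ℓ∞ norm. -/
noncomputable def linf {d : ℕ} (x : EuclideanSpace ℝ (Fin d)) : ℝ := ⨆ i, |x i|

lemma htSet_spec {d : ℕ} (k : ℕ) (x : EuclideanSpace ℝ (Fin d)) :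
    htSet k x ∈ (Finset.univ : Finset (Fin d)).powersetCard (min k d) ∧
      ∀ S ∈ (Finset.univ : Finset (Fin d)).powersetCard (min k d),
        ∑ i ∈ S, (x i) ^ 2 ≤ ∑ i ∈ htSet k x, (x i) ^ 2 :=
  (Finset.exists_max_image ((Finset.univ : Finset (Fin d)).powersetCard (min k d))
    (fun S => ∑ i ∈ S, (x i) ^ 2)
    ((Finset.powersetCard_nonempty).2 (by simp))).choose_spec

lemma htSet_card {d : ℕ} (k : ℕ) (x : EuclideanSpace ℝ (Fin d)) :
    (htSet k x).card = min k d := by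
  have := (htSet_spec k x).1
  rw [Finset.mem_powersetCard] at this
  simpa using this.2

lemma htSet_swap {d : ℕ} (k : ℕ) (x : EuclideanSpace ℝ (Fin d)) {i j : Fin d}
    (hi : i ∉ htSet k x) (hj : j ∈ htSet k x) : x i ^ 2 ≤ x j ^ 2 := by
  have hnot : i ∉ (htSet k x).erase j := fun hmem => hi (Finset.mem_of_mem_erase hmem)
  have hcard : (insert i ((htSet k x).erase j)).card = min k d := by
    rw [Finset.card_insert_of_notMem hnot, Finset.card_erase_of_mem hj, htSet_card]
    have : 0 < (htSet k x).card := Finset.card_pos.2 ⟨j, hj⟩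
    rw [htSet_card] at this
    omega
  have hmax := (htSet_spec k x).2 (insert i ((htSet k x).erase j))
    (Finset.mem_powersetCard.2 ⟨Finset.subset_univ _, hcard⟩)
  rw [Finset.sum_insert hnot] at hmax
  have herase := Finset.sum_erase_add (htSet k x) (fun i => x i ^ 2) hj
  simp only at herase hmax
  linarith

lemma enorm_eq {d : ℕ} (v : EuclideanSpace ℝ (Fin d)) :
    ‖v‖ = Real.sqrt (∑ i, (v i) ^ 2) := by
  rw [EuclideanSpace.norm_eq]
  congr 1
  refine Finset.sum_congr rfl fun i _ => ?_
  rw [Real.norm_eq_abs, sq_abs]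

theorem stmt2 (d s sstar : ℕ) (h : sstar ≤ s) (γ : ℝ)
    (θt g θhat : EuclideanSpace ℝ (Fin d)) (hsp : (supp θhat).card ≤ sstar) :
    ‖HT s (θt - γ • g) - θhat‖ ≤
      (1 + Real.sqrt ((sstar : ℝ) / s)) *
        ‖restr (supp (HT s (θt - γ • g)) ∪ supp θhat) (θt - γ • g) - θhat‖ := by
  set z : EuclideanSpace ℝ (Fin d) := θt - γ • g with hzdef
  set T := htSet s z with hTdef
  set Sh := supp (HT s z) ∪ supp θhat with hShdef
  have hHT : ∀ i, HT s z i = if i ∈ T then z i else 0 := fun i => rfl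
  have hrestr : ∀ (S : Finset (Fin d)) i, restr S z i = if i ∈ S then z i else 0 :=
    fun S i => rfl
  have hsub : ∀ (x y : EuclideanSpace ℝ (Fin d)) i, (x - y) i = x i - y i := fun x y i => rfl
  have hmemsupp : ∀ (x : EuclideanSpace ℝ (Fin d)) i, i ∈ supp x ↔ x i ≠ 0 := by
    intro x i; simp [supp]
  -- trivial case s = 0
  by_cases hs0 : s = 0
  · have hss0 : sstar = 0 := by omega
    have hth : θhat = 0 := by
      ext i
      by_contra hne
      have : i ∈ supp θhat := (hmemsupp θhat i).2 hne
      have hcard := Finset.card_pos.2 ⟨i, this⟩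
      omega
    have hT0 : T = ∅ := by
      apply Finset.card_eq_zero.1
      rw [hTdef, htSet_card, hs0]
      simp
    have hHT0 : HT s z = 0 := by
      ext i
      rw [hHT, hT0]
      simp
    rw [hHT0, hth]
    simp only [sub_zero, norm_zero]
    positivity
  have hspos : 0 < s := Nat.pos_of_ne_zero hs0
  -- key sets
  set A := Sh \ T with hAdef
  set C := T \ supp θhat with hCdef
  have hsuppHT : supp (HT s z) ⊆ T := by
    intro i hi
    rw [hmemsupp] at hi
    by_contra hiT
    exact hi (by rw [hHT, if_neg hiT])
  have hzzero : ∀ j, j ∈ T → j ∉ Sh → z j = 0 := by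
    intro j hjT hjS
    have hj0 : HT s z j = 0 := by
      by_contra hne
      exact hjS (Finset.mem_union_left _ ((hmemsupp _ j).2 hne))
    rwa [hHT, if_pos hjT] at hj0
  -- sum identity for D = HT s z - restr Sh z
  have hDsum : ∑ i, ((HT s z - restr Sh z) i) ^ 2 = ∑ i ∈ A, z i ^ 2 := by
    have hpt : ∀ i, ((HT s z - restr Sh z) i) ^ 2 = if i ∈ A then z i ^ 2 else 0 := by
      intro i
      rw [hsub, hHT, hrestr]
      by_cases hiT : i ∈ T
      · have hiA : i ∉ A := by rw [hAdef, Finset.mem_sdiff]; tauto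
        by_cases hiS : i ∈ Sh
        · simp [hiT, hiS, hiA]
        · simp [hiT, hiS, hiA, hzzero i hiT hiS]
      · by_cases hiS : i ∈ Sh
        · have hiA : i ∈ A := by rw [hAdef, Finset.mem_sdiff]; exact ⟨hiS, hiT⟩
          simp [hiT, hiS, hiA]
        · have hiA : i ∉ A := by rw [hAdef, Finset.mem_sdiff]; tauto
          simp [hiT, hiS, hiA]
    simp_rw [hpt]
    rw [Finset.sum_ite_mem, Finset.univ_inter]
  -- E = restr Sh z - θhat dominates on C
  have hEC : ∀ j ∈ C, (restr Sh z - θhat) j = z j := by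
    intro j hj
    rw [Finset.mem_sdiff] at hj
    have hth0 : θhat j = 0 := by
      by_contra hne
      exact hj.2 ((hmemsupp θhat j).2 hne)
    rw [hsub, hrestr, hth0, sub_zero]
    by_cases hjS : j ∈ Sh
    · rw [if_pos hjS]
    · rw [if_neg hjS, hzzero j hj.1 hjS]
  have hEsum : ∑ j ∈ C, z j ^ 2 ≤ ∑ j, ((restr Sh z - θhat) j) ^ 2 := by
    calc ∑ j ∈ C, z j ^ 2 = ∑ j ∈ C, ((restr Sh z - θhat) j) ^ 2 :=
          Finset.sum_congr rfl fun j hj => by rw [hEC j hj]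
      _ ≤ ∑ j, ((restr Sh z - θhat) j) ^ 2 :=
          Finset.sum_le_sum_of_subset_of_nonneg (Finset.subset_univ C)
            (fun j _ _ => sq_nonneg _)
  -- the key inequality on sums
  have hkey : ∑ i ∈ A, z i ^ 2 ≤ ((sstar : ℝ) / s) * ∑ j ∈ C, z j ^ 2 := by
    by_cases hds : d < s
    · have hTuniv : T = Finset.univ := by
        apply Finset.eq_univ_of_card
        rw [hTdef, htSet_card]
        simp; omega
      have hA0 : A = ∅ := by rw [hAdef, hTuniv]; simp
      rw [hA0]
      simp only [Finset.sum_empty]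
      positivity
    · push_neg at hds
      have hTcard : T.card = s := by rw [hTdef, htSet_card]; omega
      have hTne : T.Nonempty := Finset.card_pos.1 (by omega)
      set m : ℝ := T.inf' hTne (fun j => z j ^ 2) with hmdef
      obtain ⟨j₀, hj₀, hj₀m⟩ := Finset.exists_mem_eq_inf' hTne (fun j => z j ^ 2)
      have hm0 : 0 ≤ m := by rw [hmdef, hj₀m]; positivity
      have hAm : ∀ i ∈ A, z i ^ 2 ≤ m := by
        intro i hi
        rw [Finset.mem_sdiff] at hi
        exact Finset.le_inf' hTne _ fun j hj => htSet_swap s z hi.2 hj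
      have h2 : ∑ i ∈ A, z i ^ 2 ≤ (A.card : ℝ) * m := by
        simpa [nsmul_eq_mul] using Finset.sum_le_card_nsmul A _ m hAm
      have h3 : (C.card : ℝ) * m ≤ ∑ j ∈ C, z j ^ 2 := by
        have := Finset.card_nsmul_le_sum C (fun j => z j ^ 2) m
          (fun j hj => Finset.inf'_le _ (Finset.mem_sdiff.1 hj).1)
        simpa [nsmul_eq_mul] using this
      -- cardinality inequality
      have hAeq : A = supp θhat \ T := by
        rw [hAdef, hShdef, Finset.union_sdiff_distrib,
          Finset.sdiff_eq_empty_iff_subset.2 hsuppHT, Finset.empty_union]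
      have hc1 : A.card + (supp θhat ∩ T).card ≤ sstar := by
        rw [hAeq, Finset.card_sdiff_add_card_inter]
        exact hsp
      have hc2 : C.card + (T ∩ supp θhat).card = s := by
        rw [hCdef, Finset.card_sdiff_add_card_inter, hTcard]
      rw [Finset.inter_comm] at hc1
      have hac : A.card ≤ C.card := by omega
      have h4 : s * A.card ≤ sstar * C.card := by
        nlinarith [hc1, hc2, hac, h, Nat.mul_le_mul_left ((T ∩ supp θhat).card) hac]
      have h4' : (s : ℝ) * (A.card : ℝ) ≤ (sstar : ℝ) * (C.card : ℝ) := by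
        exact_mod_cast h4
      rw [div_mul_eq_mul_div, le_div_iff₀ (by exact_mod_cast hspos)]
      nlinarith [mul_le_mul_of_nonneg_right h4' hm0,
        mul_le_mul_of_nonneg_left h2 (show (0:ℝ) ≤ s by positivity),
        mul_le_mul_of_nonneg_left h3 (show (0:ℝ) ≤ sstar by positivity)]
  -- norm bound for D
  have hD : ‖HT s z - restr Sh z‖ ≤ Real.sqrt ((sstar : ℝ) / s) * ‖restr Sh z - θhat‖ := by
    rw [enorm_eq, enorm_eq, hDsum]
    calc Real.sqrt (∑ i ∈ A, z i ^ 2)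
        ≤ Real.sqrt (((sstar : ℝ) / s) * ∑ j ∈ C, z j ^ 2) := Real.sqrt_le_sqrt hkey
      _ = Real.sqrt ((sstar : ℝ) / s) * Real.sqrt (∑ j ∈ C, z j ^ 2) :=
          Real.sqrt_mul (by positivity) _
      _ ≤ Real.sqrt ((sstar : ℝ) / s) * Real.sqrt (∑ j, ((restr Sh z - θhat) j) ^ 2) :=
          mul_le_mul_of_nonneg_left (Real.sqrt_le_sqrt hEsum) (Real.sqrt_nonneg _)
  -- triangle inequality
  have htri : ‖HT s z - θhat‖ ≤ ‖HT s z - restr Sh z‖ + ‖restr Sh z - θhat‖ := by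
    have : HT s z - θhat = (HT s z - restr Sh z) + (restr Sh z - θhat) := by abel
    rw [this]
    exact norm_add_le _ _
  calc ‖HT s z - θhat‖ ≤ ‖HT s z - restr Sh z‖ + ‖restr Sh z - θhat‖ := htri
    _ ≤ Real.sqrt ((sstar : ℝ) / s) * ‖restr Sh z - θhat‖ + ‖restr Sh z - θhat‖ := by
        linarith
    _ = (1 + Real.sqrt ((sstar : ℝ) / s)) * ‖restr Sh z - θhat‖ := by ring
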